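/- Fix ρ ∈ E, N = N_ρ, α_p = v_p(N), and let p be a prime and 0 ≤ γ ≤ α_p. Then ben(N/p^γ) = ρ γ log p + ℓ(p^{α_p−γ}) − ℓ(p^{α_p}) is nondecreasing for 0 ≤ γ ≤ α_p. -/

import Mathlib

/-- ℓ(M): the sum of the prime powers in the standard factorization of M. -/
def ell (M : ℕ) : ℕ := ∑ p ∈ M.primeFactors, p ^ M.factorization p

/-- The benefit of M with respect to the superchampion N associated to ρ. -/
noncomputable def ben (ρ : ℝ) (N M : ℕ) : ℝ :=
  (ell M : ℝ) - (ell N : ℝ) - ρ * (Real.log M - Real.log N)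

lemma ell_prime_pow {p : ℕ} (hp : p.Prime) {k : ℕ} (hk : k ≠ 0) :
    ell (p ^ k) = p ^ k := by
  unfold ell
  rw [Nat.primeFactors_prime_pow hk hp, Finset.sum_singleton, hp.factorization_pow]
  simp

lemma ell_pow_mul {p m : ℕ} (hp : p.Prime) (hm0 : m ≠ 0) (hpm : ¬ p ∣ m) (k : ℕ) :
    ell (p ^ k * m) = ell (p ^ k) + ell m := by
  rcases Nat.eq_zero_or_pos k with rfl | hk
  · simp [ell]
  have hk0 : k ≠ 0 := hk.ne'
  have hpk : p ^ k ≠ 0 := pow_ne_zero _ hp.pos.ne'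
  have hpnot : p ∉ m.primeFactors := fun h => hpm (Nat.dvd_of_mem_primeFactors h)
  have hfac : (p ^ k * m).primeFactors = insert p m.primeFactors := by
    rw [Nat.primeFactors_mul hpk hm0, Nat.primeFactors_prime_pow hk0 hp]
    rw [Finset.insert_eq]
  rw [ell_prime_pow hp hk0]
  unfold ell
  rw [hfac, Finset.sum_insert hpnot]
  congr 1
  · rw [Nat.factorization_mul hpk hm0]
    simp [hp.factorization_pow, Nat.factorization_eq_zero_of_not_dvd hpm]
  · apply Finset.sum_congr rfl
    intro q hq
    have hqp : q ≠ p := fun h => hpnot (h ▸ hq)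
    rw [Nat.factorization_mul hpk hm0]
    simp [hp.factorization_pow, Finsupp.single_eq_of_ne hqp]

lemma ell_step_real {p : ℕ} (hp : p.Prime) {k α : ℕ} (hk : 1 ≤ k) (hkα : k ≤ α) :
    (ell (p ^ k) : ℝ) - (ell (p ^ (k - 1)) : ℝ) ≤
      (ell (p ^ α) : ℝ) - (ell (p ^ (α - 1)) : ℝ) := by
  rcases eq_or_lt_of_le hkα with rfl | h
  · exact le_refl _
  have hα1 : α - 1 ≠ 0 := by omega
  have hα0 : α ≠ 0 := by omega
  have hk1 : k - 1 ≤ α - 1 := by omega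
  have hp1 : (1:ℝ) ≤ (p:ℝ) := by exact_mod_cast hp.one_lt.le
  have hp2 : (2:ℝ) ≤ (p:ℝ) := by exact_mod_cast hp.two_le
  rw [ell_prime_pow hp (by omega : k ≠ 0), ell_prime_pow hp hα0, ell_prime_pow hp hα1]
  push_cast
  rcases Nat.eq_or_lt_of_le hk with h1 | h2
  · -- k = 1
    have hk1' : k - 1 = 0 := by omega
    rw [hk1', pow_zero, ← h1, pow_one]
    simp [ell]
    -- goal: p - 0 ≤ p^α - p^(α-1), i.e. p + p^(α-1) ≤ p^α
    have h3 : (p:ℝ) ^ 1 ≤ (p:ℝ) ^ (α-1) := pow_le_pow_right₀ hp1 (by omega)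
    have h4 : (p:ℝ) ^ α = (p:ℝ) ^ (α-1) * p := by
      rw [← pow_succ]; congr 1; omega
    nlinarith
  · rw [ell_prime_pow hp (by omega : k - 1 ≠ 0)]
    push_cast
    have h3 : (p:ℝ) ^ (k-1) ≤ (p:ℝ) ^ (α-1) := pow_le_pow_right₀ hp1 hk1
    have h4 : (p:ℝ) ^ α = (p:ℝ) ^ (α-1) * p := by rw [← pow_succ]; congr 1; omega
    have h5 : (p:ℝ) ^ k = (p:ℝ) ^ (k-1) * p := by rw [← pow_succ]; congr 1; omega
    nlinarith

theorem ben_div_pow_monotone (ρ : ℝ) (N : ℕ) (hN : 0 < N)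
    (hsc : ∀ M : ℕ, 0 < M →
      (ell N : ℝ) - ρ * Real.log N ≤ (ell M : ℝ) - ρ * Real.log M)
    (p : ℕ) (hp : p.Prime) :
    (∀ γ : ℕ, γ ≤ N.factorization p →
      ben ρ N (N / p ^ γ) =
        ρ * (γ : ℝ) * Real.log p
          + (ell (p ^ (N.factorization p - γ)) : ℝ)
          - (ell (p ^ N.factorization p) : ℝ)) ∧
    (∀ γ γ' : ℕ, γ ≤ γ' → γ' ≤ N.factorization p →
      ben ρ N (N / p ^ γ) ≤ ben ρ N (N / p ^ γ')) := by
  set α := N.factorization p with hαdef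
  set m := N / p ^ α with hmdef
  have hNm : p ^ α * m = N := Nat.ordProj_mul_ordCompl_eq_self N p
  have hpm : ¬ p ∣ m := Nat.not_dvd_ordCompl hp hN.ne'
  have hm0 : m ≠ 0 := by
    intro h; rw [h, mul_zero] at hNm; omega
  have hformula : ∀ γ : ℕ, γ ≤ α →
      ben ρ N (N / p ^ γ) =
        ρ * (γ : ℝ) * Real.log p + (ell (p ^ (α - γ)) : ℝ) - (ell (p ^ α) : ℝ) := by
    intro γ hγ
    have hdiv : N / p ^ γ = p ^ (α - γ) * m := by
      rw [← hNm]
      have : p ^ α = p ^ γ * p ^ (α - γ) := by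
        rw [← pow_add]; congr 1; omega
      rw [this, mul_assoc, Nat.mul_div_cancel_left _ (pow_pos hp.pos γ)]
    have hellN : ell N = ell (p ^ α) + ell m := by
      rw [← hNm, ell_pow_mul hp hm0 hpm]
    have hellQ : ell (N / p ^ γ) = ell (p ^ (α - γ)) + ell m := by
      rw [hdiv, ell_pow_mul hp hm0 hpm]
    have hdvd : p ^ γ ∣ N := by
      rw [← hNm]
      exact Dvd.dvd.mul_right (pow_dvd_pow p hγ) m
    have hne : ((p ^ γ : ℕ) : ℝ) ≠ 0 := by
      exact_mod_cast (pow_pos hp.pos γ).ne'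
    have hlog : Real.log ((N / p ^ γ : ℕ) : ℝ) = Real.log N - (γ : ℝ) * Real.log p := by
      rw [Nat.cast_div hdvd hne, Real.log_div (by exact_mod_cast hN.ne') hne]
      push_cast
      rw [Real.log_pow]
    unfold ben
    rw [hlog, hellN, hellQ]
    push_cast
    ring
  refine ⟨hformula, ?_⟩
  intro γ γ' hle hle'
  rcases Nat.eq_zero_or_pos α with hα0 | hαpos
  · have : γ = γ' := by omega
    rw [this]
  -- key inequality from hsc at N / p
  have hdvdα : p ^ α ∣ N := ⟨m, hNm.symm⟩
  have hQpos : 0 < N / p :=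
    Nat.div_pos (Nat.le_of_dvd hN
      (dvd_trans (dvd_pow_self p (by omega : α ≠ 0)) hdvdα)) hp.pos
  have hben1 : 0 ≤ ben ρ N (N / p) := by
    have h := hsc (N / p) hQpos
    unfold ben
    linarith
  have hkey : (ell (p ^ α) : ℝ) - (ell (p ^ (α - 1)) : ℝ) ≤ ρ * Real.log p := by
    have h1 := hformula 1 hαpos
    rw [pow_one] at h1
    rw [h1] at hben1
    push_cast at hben1 ⊢
    linarith
  -- step monotonicity
  have hstep : ∀ j : ℕ, j + 1 ≤ α →
      ben ρ N (N / p ^ j) ≤ ben ρ N (N / p ^ (j + 1)) := by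
    intro j hj
    rw [hformula j (by omega), hformula (j+1) hj]
    have hs := ell_step_real hp (k := α - j) (α := α) (by omega) (by omega)
    have he1 : α - j - 1 = α - (j + 1) := by omega
    rw [he1] at hs
    push_cast
    nlinarith [hs, hkey]
  clear hben1 hkey
  induction γ', hle using Nat.le_induction with
  | base => exact le_refl _
  | succ n hn ih =>
    exact le_trans (ih (by omega)) (hstep n hle')
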